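/- For x, y ∈ (0,1), the Kullback-Leibler divergence from Bernoulli(x) to Bernoulli(y) satisfies D_KL(Ber(x) ‖ Ber(y)) ≥ (x-y)²/(2·max{x,y}). -/

import Mathlib

open Real Set

private lemma kl_deriv_aux (x : ℝ) (t : ℝ) (ht0 : 0 < t) (ht1 : t < 1) :
    HasDerivAt (fun t => x * (Real.log x - Real.log t)
      + (1 - x) * (Real.log (1 - x) - Real.log (1 - t)))
      (-(x/t) + (1 - x)/(1 - t)) t := by
  have ht0' : t ≠ 0 := ne_of_gt ht0
  have ht1' : (1:ℝ) - t ≠ 0 := by linarith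
  have h1 := ((Real.hasDerivAt_log ht0').const_sub (Real.log x)).const_mul x
  have h2a : HasDerivAt (fun t : ℝ => (1:ℝ) - t) (-1) t := (hasDerivAt_id t).const_sub 1
  have h2b := (Real.hasDerivAt_log ht1').comp t h2a
  have h2 := (h2b.const_sub (Real.log (1 - x))).const_mul (1 - x)
  have h := h1.add h2
  refine h.congr_deriv ?_
  field_simp

-- Case y ≤ x : max = x
private lemma kl_case_left (x y : ℝ) (hx0 : 0 < x) (hx1 : x < 1) (hy0 : 0 < y) (hxy : y ≤ x) :
    (x - y) ^ 2 / (2 * x) ≤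
      x * (Real.log x - Real.log y) + (1 - x) * (Real.log (1 - x) - Real.log (1 - y)) := by
  set f : ℝ → ℝ := fun t => x * (Real.log x - Real.log t)
      + (1 - x) * (Real.log (1 - x) - Real.log (1 - t)) - (x - t)^2/(2*x) with hf
  have hderiv : ∀ t ∈ Ioo (0:ℝ) 1, HasDerivAt f
      (((x - t) * (t * (1 - t) - x)) / (t * (1 - t) * x)) t := by
    intro t ht
    have h1 := kl_deriv_aux x t ht.1 ht.2
    have ha : HasDerivAt (fun t : ℝ => x - t) (-1) t := (hasDerivAt_id t).const_sub x
    have h2 := (ha.pow 2).div_const (2*x)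
    have h := h1.sub h2
    refine h.congr_deriv ?_
    have ht0' : t ≠ 0 := ne_of_gt ht.1
    have ht1' : (1:ℝ) - t ≠ 0 := by linarith [ht.2]
    field_simp
    ring
  have hmem : Icc y x ⊆ Ioo (0:ℝ) 1 := fun t ht => ⟨lt_of_lt_of_le hy0 ht.1, lt_of_le_of_lt ht.2 hx1⟩
  have hanti : AntitoneOn f (Icc y x) := by
    apply antitoneOn_of_deriv_nonpos (convex_Icc y x)
    · exact fun t ht => (hderiv t (hmem ht)).continuousAt.continuousWithinAt
    · intro t ht
      rw [interior_Icc] at ht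
      exact (hderiv t (hmem (Ioo_subset_Icc_self ht))).differentiableAt.differentiableWithinAt
    · intro t ht
      rw [interior_Icc] at ht
      have h0 : (0:ℝ) < t := lt_of_lt_of_le hy0 (le_of_lt ht.1)
      have h1 : t < 1 := lt_of_lt_of_le (lt_of_lt_of_le ht.2 le_rfl) (le_of_lt hx1)
      rw [(hderiv t ⟨h0, h1⟩).deriv]
      have h1t : (0:ℝ) < 1 - t := by linarith
      apply div_nonpos_of_nonpos_of_nonneg
      · apply mul_nonpos_of_nonneg_of_nonpos
        · nlinarith [ht.2]
        · nlinarith [sq_nonneg t, ht.2]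
      · positivity
  have hfx : f x = 0 := by simp [hf]
  have := hanti ⟨le_rfl, hxy⟩ ⟨hxy, le_rfl⟩ hxy
  rw [hfx] at this
  simp only [hf] at this
  linarith

-- Case x ≤ y : max = y
private lemma kl_case_right (x y : ℝ) (hx0 : 0 < x) (hy1 : y < 1) (hxy : x ≤ y) :
    (x - y) ^ 2 / (2 * y) ≤
      x * (Real.log x - Real.log y) + (1 - x) * (Real.log (1 - x) - Real.log (1 - y)) := by
  set g : ℝ → ℝ := fun t => x * (Real.log x - Real.log t)
      + (1 - x) * (Real.log (1 - x) - Real.log (1 - t)) - (t - x)^2/(2*t) with hg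
  have hderiv : ∀ t ∈ Ioo (0:ℝ) 1, HasDerivAt g
      (((t - x) * (2*t - (t + x)*(1 - t))) / (2 * t^2 * (1 - t))) t := by
    intro t ht
    have ht0' : t ≠ 0 := ne_of_gt ht.1
    have ht1' : (1:ℝ) - t ≠ 0 := by linarith [ht.2]
    have h1 := kl_deriv_aux x t ht.1 ht.2
    have ha : HasDerivAt (fun t : ℝ => t - x) 1 t := (hasDerivAt_id t).sub_const x
    have hb := (hasDerivAt_id t).const_mul (2:ℝ)
    have h2 := (ha.pow 2).div hb (show (2:ℝ) * t ≠ 0 by positivity)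
    have h := h1.sub h2
    refine h.congr_deriv ?_
    simp only [id, Pi.pow_apply]
    push_cast
    field_simp
    ring
  have hmem : Icc x y ⊆ Ioo (0:ℝ) 1 := fun t ht => ⟨lt_of_lt_of_le hx0 ht.1, lt_of_le_of_lt ht.2 hy1⟩
  have hmono : MonotoneOn g (Icc x y) := by
    apply monotoneOn_of_deriv_nonneg (convex_Icc x y)
    · exact fun t ht => (hderiv t (hmem ht)).continuousAt.continuousWithinAt
    · intro t ht
      rw [interior_Icc] at ht
      exact (hderiv t (hmem (Ioo_subset_Icc_self ht))).differentiableAt.differentiableWithinAt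
    · intro t ht
      rw [interior_Icc] at ht
      have h0 : (0:ℝ) < t := lt_trans hx0 ht.1
      have h1 : t < 1 := lt_trans ht.2 hy1
      rw [(hderiv t ⟨h0, h1⟩).deriv]
      have h1t : (0:ℝ) < 1 - t := by linarith
      apply div_nonneg
      · apply mul_nonneg
        · nlinarith [ht.1]
        · nlinarith [mul_nonneg (by nlinarith [ht.1] : (0:ℝ) ≤ t - x) h1t.le]
      · positivity
  have hgx : g x = 0 := by simp [hg]
  have := hmono ⟨le_rfl, hxy⟩ ⟨hxy, le_rfl⟩ hxy
  rw [hgx] at this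
  simp only [hg] at this
  have hsq : (y - x)^2 = (x - y)^2 := by ring
  linarith [this, hsq ▸ this]

/-- For `x, y ∈ (0,1)`, the Kullback-Leibler divergence from `Bernoulli(x)` to `Bernoulli(y)`,
given by `x·log(x/y) + (1-x)·log((1-x)/(1-y))`, is at least `(x-y)²/(2·max{x,y})`. -/
theorem bernoulli_klDiv_lower_bound (x y : ℝ) (hx : x ∈ Set.Ioo (0:ℝ) 1)
    (hy : y ∈ Set.Ioo (0:ℝ) 1) :
    (x - y) ^ 2 / (2 * max x y) ≤
      x * Real.log (x / y) + (1 - x) * Real.log ((1 - x) / (1 - y)) := by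
  obtain ⟨hx0, hx1⟩ := hx
  obtain ⟨hy0, hy1⟩ := hy
  rw [Real.log_div (ne_of_gt hx0) (ne_of_gt hy0),
    Real.log_div (by linarith : (1:ℝ) - x ≠ 0) (by linarith : (1:ℝ) - y ≠ 0)]
  rcases le_total y x with h | h
  · rw [max_eq_left h]
    exact kl_case_left x y hx0 hx1 hy0 h
  · rw [max_eq_right h]
    exact kl_case_right x y hx0 hy1 h
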